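/- (Model AL) For all c1, c2 > 0 and all K with 0 < K < 1, the system q2 = 2*c1*q1*(q1+q2)^2, q1 = 2*c2*q2*(q1+q2)^2 with q1, q2 > 0 has exactly one solution (q1*,q2*); moreover the Jacobian matrix J = [[1-K, K*R1'(q2*)],[dS2/dq1, dS2/dq2]] evaluated at (q1*,q2*), where S2 as a function of (q1,q2) equals (2*q2+q1)/(2*(1+c2*(q1+q2)^2)) and R1'(q2) = -(4*c1*q2*q1 + 4*c1*q1^2 - 1)/(2*c1*(q2^2 + 4*q1*q2 + 3*q1^2)), satisfies Jury's conditions 1 + tr(J) + det(J) > 0, 1 - tr(J) + det(J) > 0, and 1 - det(J) > 0; i.e., the unique positive equilibrium of Model AL is locally stable for all feasible parameter values. -/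

import Mathlib

set_option maxHeartbeats 1000000

noncomputable def S (c x y : ℝ) : ℝ := (2 * x + y) / (2 * (1 + c * (x + y) ^ 2))

lemma derivS_right (c a b : ℝ) (hc : 0 < c) :
    deriv (fun y => S c a y) b =
      (1 * (2 * (1 + c * (a + b) ^ 2)) - (2 * a + b) * (4 * c * (a + b))) /
        (2 * (1 + c * (a + b) ^ 2)) ^ 2 := by
  have hD : 2 * (1 + c * (a + b) ^ 2) ≠ 0 := by positivity
  have hx : HasDerivAt (fun y : ℝ => a + y) 1 b := by
    simpa using (hasDerivAt_id b).const_add a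
  have hp : HasDerivAt (fun y : ℝ => (a + y) ^ 2) (2 * (a + b)) b := by
    simpa using hx.fun_pow 2
  have hden : HasDerivAt (fun y : ℝ => 2 * (1 + c * (a + y) ^ 2)) (4 * c * (a + b)) b := by
    have h1 := ((hp.const_mul c).const_add 1).const_mul 2
    exact h1.congr_deriv (by ring)
  have hnum : HasDerivAt (fun y : ℝ => 2 * a + y) 1 b := by
    simpa using (hasDerivAt_id b).const_add (2 * a)
  have h := hnum.div hden hD
  have : deriv (fun y => (2 * a + y) / (2 * (1 + c * (a + y) ^ 2))) b = _ := h.deriv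
  simpa [S] using this

lemma derivS_left (c a b : ℝ) (hc : 0 < c) :
    deriv (fun x => S c x b) a =
      (2 * (2 * (1 + c * (a + b) ^ 2)) - (2 * a + b) * (4 * c * (a + b))) /
        (2 * (1 + c * (a + b) ^ 2)) ^ 2 := by
  have hD : 2 * (1 + c * (a + b) ^ 2) ≠ 0 := by positivity
  have hx : HasDerivAt (fun x : ℝ => x + b) 1 a := by
    simpa using (hasDerivAt_id a).add_const b
  have hp : HasDerivAt (fun x : ℝ => (x + b) ^ 2) (2 * (a + b)) a := by
    simpa using hx.fun_pow 2
  have hden : HasDerivAt (fun x : ℝ => 2 * (1 + c * (x + b) ^ 2)) (4 * c * (a + b)) a := by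
    have h1 := ((hp.const_mul c).const_add 1).const_mul 2
    exact h1.congr_deriv (by ring)
  have hnum : HasDerivAt (fun x : ℝ => 2 * x + b) 2 a := by
    simpa using ((hasDerivAt_id a).const_mul 2).add_const b
  have h := hnum.div hden hD
  have : deriv (fun x : ℝ => (2 * x + b) / (2 * (1 + c * (x + b) ^ 2))) a = _ := h.deriv
  simpa [S] using this

theorem modelAL_unique_stable (c1 c2 K : ℝ) (hc1 : 0 < c1) (hc2 : 0 < c2)
    (hK0 : 0 < K) (hK1 : K < 1) :
    (∃! p : ℝ × ℝ, 0 < p.1 ∧ 0 < p.2 ∧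
      p.2 = 2 * c1 * p.1 * (p.1 + p.2) ^ 2 ∧
      p.1 = 2 * c2 * p.2 * (p.1 + p.2) ^ 2) ∧
    (∀ q1 q2 : ℝ, 0 < q1 → 0 < q2 →
      q2 = 2 * c1 * q1 * (q1 + q2) ^ 2 → q1 = 2 * c2 * q2 * (q1 + q2) ^ 2 →
      ∀ J : Matrix (Fin 2) (Fin 2) ℝ,
        J = !![1 - K, K * (-(4 * c1 * q2 * q1 + 4 * c1 * q1 ^ 2 - 1) /
                 (2 * c1 * (q2 ^ 2 + 4 * q1 * q2 + 3 * q1 ^ 2)));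
               deriv (fun y => S c2 q2 y) q1, deriv (fun x => S c2 x q1) q2] →
        1 + Matrix.trace J + Matrix.det J > 0 ∧
        1 - Matrix.trace J + Matrix.det J > 0 ∧
        1 - Matrix.det J > 0) := by
  constructor
  · -- existence and uniqueness
    set s : ℝ := (4 * c1 * c2) ^ (-(1/4) : ℝ) with hs
    have hsp : 0 < s := Real.rpow_pos_of_pos (by positivity) _
    have hs4 : 4 * c1 * c2 * s ^ 4 = 1 := by
      have h : s ^ 4 = ((4 * c1 * c2) ^ (-(1/4) : ℝ)) ^ (4 : ℕ) := by rw [hs]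
      rw [h, ← Real.rpow_natCast ((4 * c1 * c2) ^ (-(1/4) : ℝ)) 4,
        ← Real.rpow_mul (by positivity)]
      norm_num
      rw [Real.rpow_neg (by positivity), Real.rpow_one]
      field_simp
    set q2 : ℝ := 2 * c1 * s ^ 3 / (1 + 2 * c1 * s ^ 2) with hq2
    set q1 : ℝ := s / (1 + 2 * c1 * s ^ 2) with hq1
    have hden : (0:ℝ) < 1 + 2 * c1 * s ^ 2 := by positivity
    have hq1p : 0 < q1 := by positivity
    have hq2p : 0 < q2 := by positivity
    have hsum : q1 + q2 = s := by
      rw [hq1, hq2]; field_simp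
    refine ⟨(q1, q2), ⟨hq1p, hq2p, ?_, ?_⟩, ?_⟩
    · simp only
      rw [hsum, hq2, hq1]; field_simp
    · simp only
      rw [hsum, hq1, hq2]
      field_simp
      nlinarith [hs4, sq_nonneg s]
    · rintro ⟨p1, p2⟩ ⟨hp1, hp2, he1, he2⟩
      simp only at he1 he2 hp1 hp2 ⊢
      set σ : ℝ := p1 + p2 with hσ
      clear_value σ
      have hσp : 0 < σ := by rw [hσ]; positivity
      have h : p1 = 2 * c2 * (2 * c1 * p1 * σ ^ 2) * σ ^ 2 := by rw [← he1]; exact he2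
      have hz : p1 * (4 * c1 * c2 * σ ^ 4 - 1) = 0 := by linear_combination -h
      have h4 : 4 * c1 * c2 * σ ^ 4 = 1 := by
        rcases mul_eq_zero.1 hz with h' | h'
        · exact absurd h' (ne_of_gt hp1)
        · linarith
      have hσs : σ = s := by
        have h1 : σ ^ 4 = s ^ 4 := by
          have h2 : 4 * c1 * c2 * σ ^ 4 = 4 * c1 * c2 * s ^ 4 := by rw [h4, hs4]
          exact mul_left_cancel₀ (by positivity) h2
        rcases lt_trichotomy σ s with h' | h' | h'
        · have := pow_lt_pow_left₀ h' hσp.le (by norm_num : (4:ℕ) ≠ 0); linarith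
        · exact h'
        · have := pow_lt_pow_left₀ h' hsp.le (by norm_num : (4:ℕ) ≠ 0); linarith
      have hp1s : p1 = s - p2 := by rw [← hσs, hσ]; ring
      have hp2v : p2 = q2 := by
        rw [hq2, eq_div_iff (ne_of_gt hden)]
        rw [hσs, hp1s] at he1
        linear_combination he1
      have hp1v : p1 = q1 := by
        rw [hp1s, hp2v, hq2, hq1]; field_simp; ring
      exact Prod.ext hp1v hp2v
  · intro q1 q2 hq1 hq2 h1 h2 J hJ
    have hsum : (0:ℝ) < q1 + q2 := by positivity
    -- closed forms for coefficients via c1, c2 substitution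
    have hc1e : c1 = q2 / (2 * q1 * (q1 + q2) ^ 2) := by
      field_simp
      linarith [h1]
    have hc2e : c2 = q1 / (2 * q2 * (q1 + q2) ^ 2) := by
      field_simp
      linarith [h2]
    have hJ21 : deriv (fun y => S c2 q2 y) q1 = q2 * (q2 - q1) / ((q1 + q2) * (2 * q2 + q1)) := by
      rw [derivS_right c2 q2 q1 hc2, hc2e]
      have h1 : q2 + q1 = q1 + q2 := by ring
      field_simp
      ring
    have hJ22 : deriv (fun x => S c2 x q1) q2 = 2 * q2 ^ 2 / ((q1 + q2) * (2 * q2 + q1)) := by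
      rw [derivS_left c2 q2 q1 hc2, hc2e]
      field_simp
      ring
    have hR : (-(4 * c1 * q2 * q1 + 4 * c1 * q1 ^ 2 - 1) /
        (2 * c1 * (q2 ^ 2 + 4 * q1 * q2 + 3 * q1 ^ 2))) =
        q1 * (q1 - q2) / (q2 * (q2 + 3 * q1)) := by
      rw [hc1e]
      have hne : q2 ^ 2 + 4 * q1 * q2 + 3 * q1 ^ 2 > 0 := by positivity
      field_simp
      ring
    -- abbreviations
    set a : ℝ := 2 * q2 ^ 2 / ((q1 + q2) * (2 * q2 + q1)) with ha
    set b : ℝ := q1 * (q1 - q2) ^ 2 / ((q1 + q2) * (2 * q2 + q1) * (q2 + 3 * q1)) with hb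
    have hP : (0:ℝ) < (q1 + q2) * (2 * q2 + q1) := by positivity
    have ha0 : 0 < a := by rw [ha]; positivity
    have ha1 : a < 1 := by
      rw [ha, div_lt_one hP]; nlinarith
    have hb0 : 0 ≤ b := by rw [hb]; positivity
    have hb1 : b < 1 := by
      rw [hb, div_lt_one (by positivity)]
      nlinarith [pow_pos hq1 3, mul_pos (mul_pos hq1 hq1) hq2, mul_pos (mul_pos hq1 hq2) hq2, pow_pos hq2 3, sq_nonneg (q1 - q2)]
    have htr : Matrix.trace J = (1 - K) + a := by
      rw [hJ, Matrix.trace_fin_two_of, hJ22]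
    have hdet : Matrix.det J = (1 - K) * a + K * b := by
      rw [hJ, Matrix.det_fin_two_of, hJ22, hJ21, hR, ha, hb]
      field_simp
      ring
    rw [htr, hdet]
    refine ⟨by nlinarith, by nlinarith, by nlinarith⟩
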